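/- Let H be a hypergraph, let e₀ ∈ E(H) with |e₀| ≥ 3, and let v ∈ V(H) ∖ e₀. Suppose that for every F ⊆ E(H), |⋃_{e∈F} e| ≥ Σ_{e∈F}(|e|−1). Let C be the connected component containing v in the 2-section of the hypergraph H − e₀ (H with hyperedge e₀ removed). Then |e₀ ∩ C| ≤ 2. -/
import Mathlib


/-- The 2-section of a hypergraph with hyperedge set `E`. -/
def twoSection {V : Type*} (E : Finset (Finset V)) : SimpleGraph V :=
  SimpleGraph.fromRel (fun u v => ∃ e ∈ E, u ∈ e ∧ v ∈ e)

theorem stmt11 {V : Type*} [Fintype V] [DecidableEq V] (E : Finset (Finset V))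
    (e₀ : Finset V) (he₀ : e₀ ∈ E) (he₀card : 3 ≤ e₀.card)
    (v : V) (hv : v ∉ e₀)
    (hsparse : ∀ F ⊆ E, ∑ e ∈ F, (e.card - 1) ≤ (F.biUnion id).card) :
    ((e₀ : Set V) ∩ {u : V | (twoSection (E.erase e₀)).Reachable v u}).ncard ≤ 2 := by
  classical
  set G := twoSection (E.erase e₀) with hG
  set d : V → ℕ := fun u => G.dist v u with hd
  set Cf : Finset V := Finset.univ.filter (fun u => G.Reachable v u) with hCf
  have hvC : v ∈ Cf := Finset.mem_filter.mpr ⟨Finset.mem_univ _, SimpleGraph.Reachable.refl v⟩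
  have hset : ((e₀ : Set V) ∩ {u : V | G.Reachable v u}) = ↑(e₀ ∩ Cf) := by
    ext u; simp [hCf]
  rw [hset, Set.ncard_coe_finset]
  -- edges are contained in components
  have hclosed : ∀ e ∈ E.erase e₀, ∀ u ∈ e, G.Reachable v u → ∀ w ∈ e, G.Reachable v w := by
    intro e he u hu hru w hw
    rcases eq_or_ne u w with rfl | hne
    · exact hru
    · refine hru.trans (SimpleGraph.Adj.reachable ?_)
      rw [hG, twoSection, SimpleGraph.fromRel_adj]
      exact ⟨hne, Or.inl ⟨e, he, hu, hw⟩⟩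
  -- for each non-v vertex of the component, an edge going closer to v
  have hstep : ∀ u, ∃ e : Finset V, u ∈ Cf.erase v →
      e ∈ E.erase e₀ ∧ u ∈ e ∧ ∃ w ∈ e, d w < d u := by
    intro u
    by_cases h : u ∈ Cf.erase v
    · have hne : u ≠ v := (Finset.mem_erase.mp h).1
      have hru : G.Reachable v u := by
        have := (Finset.mem_erase.mp h).2
        simpa [hCf] using this
      obtain ⟨p, hp⟩ := hru.exists_walk_length_eq_dist
      cases hq : p.reverse with
      | nil =>
        exact absurd (SimpleGraph.Walk.eq_of_length_eq_zero (p := p.reverse)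
          (by rw [hq]; rfl)) hne
      | @cons _ w _ hadj r =>
        have hadj' : G.Adj u w := hadj
        obtain ⟨e, he, hue, hwe⟩ : ∃ e ∈ E.erase e₀, u ∈ e ∧ w ∈ e := by
          have := ((SimpleGraph.fromRel_adj _ u w).mp hadj').2
          rcases this with ⟨e, he, h1, h2⟩ | ⟨e, he, h1, h2⟩
          · exact ⟨e, he, h1, h2⟩
          · exact ⟨e, he, h2, h1⟩
        refine ⟨e, fun _ => ⟨he, hue, w, hwe, ?_⟩⟩
        have hlen : r.length + 1 = d u := by
          have : p.reverse.length = p.length := p.length_reverse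
          rw [hq] at this
          simpa [hp] using this
        have hdw : d w ≤ r.length := by
          have := SimpleGraph.dist_le r.reverse
          simpa [hd] using this
        omega
    · exact ⟨∅, fun hc => absurd hc h⟩
  choose f hf using hstep
  set F' : Finset (Finset V) := (Cf.erase v).image f with hF'
  -- fiberwise count
  have h1 : (Cf.erase v).card = ∑ e ∈ F', ((Cf.erase v).filter (fun u => f u = e)).card :=
    Finset.card_eq_sum_card_fiberwise (fun x hx => Finset.mem_image_of_mem f hx)
  have h2 : ∀ e ∈ F', ((Cf.erase v).filter (fun u => f u = e)).card ≤ e.card - 1 := by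
    intro e he
    obtain ⟨u₀, hu₀, hfu₀⟩ := Finset.mem_image.mp he
    have hu₀e : u₀ ∈ e := hfu₀ ▸ (hf u₀ hu₀).2.1
    obtain ⟨m, hme, hmin⟩ := Finset.exists_min_image e d ⟨u₀, hu₀e⟩
    have hsub : (Cf.erase v).filter (fun u => f u = e) ⊆ e.erase m := by
      intro u hu
      obtain ⟨huC, hfu⟩ := Finset.mem_filter.mp hu
      obtain ⟨_, hue, w, hwe, hdw⟩ := hf u huC
      rw [hfu] at hue hwe
      refine Finset.mem_erase.mpr ⟨?_, hue⟩
      intro hum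
      have := hmin w hwe
      rw [hum] at hdw
      omega
    calc ((Cf.erase v).filter (fun u => f u = e)).card ≤ (e.erase m).card :=
          Finset.card_le_card hsub
      _ = e.card - 1 := Finset.card_erase_of_mem hme
  have h3 : (Cf.erase v).card ≤ ∑ e ∈ F', (e.card - 1) := by
    rw [h1]; exact Finset.sum_le_sum h2
  have hF'sub : F' ⊆ E.erase e₀ := by
    intro e he
    obtain ⟨u, hu, hfu⟩ := Finset.mem_image.mp he
    exact hfu ▸ (hf u hu).1
  have he₀F' : e₀ ∉ F' := fun h => (Finset.mem_erase.mp (hF'sub h)).1 rfl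
  have hsub : insert e₀ F' ⊆ E :=
    Finset.insert_subset he₀ (hF'sub.trans (Finset.erase_subset _ _))
  have hsp := hsparse _ hsub
  rw [Finset.sum_insert he₀F'] at hsp
  -- union bound
  have hbi : (insert e₀ F').biUnion id ⊆ e₀ ∪ Cf := by
    intro x hx
    obtain ⟨e, he, hxe⟩ := Finset.mem_biUnion.mp hx
    rcases Finset.mem_insert.mp he with rfl | he'
    · exact Finset.mem_union_left _ hxe
    · obtain ⟨u, hu, hfu⟩ := Finset.mem_image.mp he'
      have hru : G.Reachable v u := by
        have := (Finset.mem_erase.mp hu).2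
        simpa [hCf] using this
      have hrx : G.Reachable v x :=
        hclosed e (hfu ▸ (hf u hu).1) u (hfu ▸ (hf u hu).2.1) hru x hxe
      exact Finset.mem_union_right _ (by simp [hCf, hrx])
  have hA : e₀.card - 1 + ∑ e ∈ F', (e.card - 1) ≤ (e₀ ∪ Cf).card :=
    hsp.trans (Finset.card_le_card hbi)
  have hB : (e₀ ∪ Cf).card + (e₀ ∩ Cf).card = e₀.card + Cf.card :=
    Finset.card_union_add_card_inter e₀ Cf
  have hD : (Cf.erase v).card + 1 = Cf.card := Finset.card_erase_add_one hvC
  omega
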